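/- Let σ : ℝ² → ℝ^(n+2) be C² with B(σ,σ) = 0, B(σ_x,σ_x) = 1 = B(σ_y,σ_y), and B(σ_x,σ_y) = 0 at every point. Then at every point the 4×4 Gram matrix M with entries M i k = B(a_i, a_k), where (a_1,a_2,a_3,a_4) = (σ, σ_x, σ_y, σ_xx+σ_yy), has determinant −4; in particular the four vectors σ, σ_x, σ_y, σ_xx+σ_yy are linearly independent, so the central sphere congruence S = span{σ, σ_x, σ_y, σ_xx+σ_yy} is a nondegenerate 4-dimensional subspace of ℝ^(n+2). -/

import Mathlib

/-- The Minkowski bilinear form of signature `(n+1, 1)` on `ℝ^(n+2)`. -/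
noncomputable def B (n : ℕ) (u v : Fin (n + 2) → ℝ) : ℝ :=
  (∑ i : Fin (n + 1), u i.castSucc * v i.castSucc) -
    u (Fin.last (n + 1)) * v (Fin.last (n + 1))

/-- The partial derivative of `σ : ℝ² → ℝ^(n+2)` in the direction `e`. -/
noncomputable def pd (n : ℕ) (σ : ℝ × ℝ → Fin (n + 2) → ℝ) (e : ℝ × ℝ)
    (p : ℝ × ℝ) : Fin (n + 2) → ℝ :=
  fderiv ℝ σ p e


lemma B_symm (n : ℕ) (u v : Fin (n+2) → ℝ) : B n u v = B n v u := by
  simp [B, mul_comm]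

lemma B_add_left (n : ℕ) (u w v : Fin (n+2) → ℝ) :
    B n (u + w) v = B n u v + B n w v := by
  simp [B, add_mul, Finset.sum_add_distrib]; ring

lemma B_add_right (n : ℕ) (u v w : Fin (n+2) → ℝ) :
    B n u (v + w) = B n u v + B n u w := by
  rw [B_symm, B_add_left, B_symm n v u, B_symm n w u]

lemma B_smul_left (n : ℕ) (c : ℝ) (u v : Fin (n+2) → ℝ) :
    B n (c • u) v = c * B n u v := by
  simp [B, Finset.mul_sum, mul_sub, mul_assoc]

lemma hasFDerivAt_Bcomp (n : ℕ) {u v : ℝ × ℝ → Fin (n+2) → ℝ}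
    {u' v' : (ℝ × ℝ) →L[ℝ] (Fin (n+2) → ℝ)} {p : ℝ × ℝ}
    (hu : HasFDerivAt u u' p) (hv : HasFDerivAt v v' p) :
    HasFDerivAt (fun q => B n (u q) (v q))
      ((∑ i : Fin (n+1),
          (u p i.castSucc • ((ContinuousLinearMap.proj i.castSucc).comp v') +
           v p i.castSucc • ((ContinuousLinearMap.proj i.castSucc).comp u'))) -
        (u p (Fin.last (n+1)) • ((ContinuousLinearMap.proj (Fin.last (n+1))).comp v') +
         v p (Fin.last (n+1)) • ((ContinuousLinearMap.proj (Fin.last (n+1))).comp u'))) p := by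
  have hcu : ∀ j : Fin (n+2), HasFDerivAt (fun q => u q j)
      ((ContinuousLinearMap.proj (R := ℝ) (φ := fun _ : Fin (n+2) => ℝ) j).comp u') p :=
    fun j => (ContinuousLinearMap.proj (R := ℝ) (φ := fun _ : Fin (n+2) => ℝ) j).hasFDerivAt.comp p hu
  have hcv : ∀ j : Fin (n+2), HasFDerivAt (fun q => v q j)
      ((ContinuousLinearMap.proj (R := ℝ) (φ := fun _ : Fin (n+2) => ℝ) j).comp v') p :=
    fun j => (ContinuousLinearMap.proj (R := ℝ) (φ := fun _ : Fin (n+2) => ℝ) j).hasFDerivAt.comp p hv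
  exact (HasFDerivAt.fun_sum fun i _ => (hcu i.castSucc).mul (hcv i.castSucc)).sub
    ((hcu (Fin.last (n+1))).mul (hcv (Fin.last (n+1))))

lemma B_deriv_zero (n : ℕ) {u v : ℝ × ℝ → Fin (n+2) → ℝ}
    {u' v' : (ℝ × ℝ) →L[ℝ] (Fin (n+2) → ℝ)} {p : ℝ × ℝ}
    (hu : HasFDerivAt u u' p) (hv : HasFDerivAt v v' p) {c : ℝ}
    (hconst : ∀ q, B n (u q) (v q) = c) (e : ℝ × ℝ) :
    B n (u' e) (v p) + B n (u p) (v' e) = 0 := by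
  have h1 := hasFDerivAt_Bcomp n hu hv
  have h2 : HasFDerivAt (fun q => B n (u q) (v q)) (0 : (ℝ × ℝ) →L[ℝ] ℝ) p := by
    have : (fun q => B n (u q) (v q)) = fun _ => c := funext hconst
    rw [this]; exact hasFDerivAt_const (𝕜 := ℝ) c p
  have hD := h1.unique h2
  have := congrArg (fun D : (ℝ × ℝ) →L[ℝ] ℝ => D e) hD
  simp only [ContinuousLinearMap.sub_apply, ContinuousLinearMap.sum_apply,
    ContinuousLinearMap.add_apply, ContinuousLinearMap.smul_apply,
    ContinuousLinearMap.comp_apply, ContinuousLinearMap.proj_apply,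
    ContinuousLinearMap.zero_apply, smul_eq_mul] at this
  simp only [B]
  rw [← this]
  rw [Finset.sum_add_distrib]
  have hsum : ∑ x : Fin (n+1), u' e x.castSucc * v p x.castSucc
      = ∑ x : Fin (n+1), v p x.castSucc * u' e x.castSucc :=
    Finset.sum_congr rfl (fun i _ => mul_comm _ _)
  rw [hsum]; ring

lemma B_zero_left (n : ℕ) (v : Fin (n+2) → ℝ) : B n 0 v = 0 := by simp [B]

lemma hasFDerivAt_pd (n : ℕ) {σ : ℝ × ℝ → Fin (n+2) → ℝ} (hσ : ContDiff ℝ 2 σ)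
    (e : ℝ × ℝ) (p : ℝ × ℝ) :
    HasFDerivAt (pd n σ e)
      ((ContinuousLinearMap.apply ℝ (Fin (n+2) → ℝ) e).comp (fderiv ℝ (fderiv ℝ σ) p)) p := by
  have h1 : ContDiff ℝ 1 (fderiv ℝ σ) := hσ.fderiv_right (by norm_num)
  exact ((ContinuousLinearMap.apply ℝ (Fin (n+2) → ℝ) e).hasFDerivAt).comp p
    ((h1.differentiable one_ne_zero p).hasFDerivAt)

lemma pd_pd_eq (n : ℕ) {σ : ℝ × ℝ → Fin (n+2) → ℝ} (hσ : ContDiff ℝ 2 σ)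
    (e e' : ℝ × ℝ) (p : ℝ × ℝ) :
    pd n (pd n σ e) e' p = fderiv ℝ (fderiv ℝ σ) p e' e := by
  show fderiv ℝ (pd n σ e) p e' = _
  rw [(hasFDerivAt_pd n hσ e p).fderiv]
  rfl

lemma pd_symm (n : ℕ) {σ : ℝ × ℝ → Fin (n+2) → ℝ} (hσ : ContDiff ℝ 2 σ)
    (e e' : ℝ × ℝ) (p : ℝ × ℝ) :
    pd n (pd n σ e) e' p = pd n (pd n σ e') e p := by
  rw [pd_pd_eq n hσ, pd_pd_eq n hσ]
  exact hσ.contDiffAt.isSymmSndFDerivAt (by norm_num) e' e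

/-- For a normalized null conformal map `σ`, the Gram matrix of
`(σ, σ_x, σ_y, σ_xx + σ_yy)` has determinant `-4`; in particular these four vectors are
linearly independent, so the central sphere congruence is a nondegenerate `4`-dimensional
subspace. -/
theorem statement9 (n : ℕ) (σ : ℝ × ℝ → Fin (n + 2) → ℝ)
    (hσ : ContDiff ℝ 2 σ)
    (h0 : ∀ p, B n (σ p) (σ p) = 0)
    (hx : ∀ p, B n (pd n σ (1, 0) p) (pd n σ (1, 0) p) = 1)
    (hy : ∀ p, B n (pd n σ (0, 1) p) (pd n σ (0, 1) p) = 1)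
    (horth : ∀ p, B n (pd n σ (1, 0) p) (pd n σ (0, 1) p) = 0) :
    ∀ p : ℝ × ℝ,
      (Matrix.of fun i k : Fin 4 =>
          B n
            (![σ p, pd n σ (1, 0) p, pd n σ (0, 1) p,
              pd n (pd n σ (1, 0)) (1, 0) p + pd n (pd n σ (0, 1)) (0, 1) p] i)
            (![σ p, pd n σ (1, 0) p, pd n σ (0, 1) p,
              pd n (pd n σ (1, 0)) (1, 0) p + pd n (pd n σ (0, 1)) (0, 1) p] k)).det =
          -4 ∧
        LinearIndependent ℝ
          ![σ p, pd n σ (1, 0) p, pd n σ (0, 1) p,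
            pd n (pd n σ (1, 0)) (1, 0) p + pd n (pd n σ (0, 1)) (0, 1) p] := by
  have hσd : ∀ q, HasFDerivAt σ (fderiv ℝ σ q) q :=
    fun q => (hσ.differentiable (by norm_num) q).hasFDerivAt
  -- first-order facts, at every point
  have f1 : ∀ q, B n (pd n σ (1, 0) q) (σ q) = 0 := by
    intro q
    have h := B_deriv_zero n (hσd q) (hσd q) h0 (1, 0)
    rw [B_symm n (σ q)] at h
    unfold pd
    linarith
  have f2 : ∀ q, B n (pd n σ (0, 1) q) (σ q) = 0 := by
    intro q
    have h := B_deriv_zero n (hσd q) (hσd q) h0 (0, 1)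
    rw [B_symm n (σ q)] at h
    unfold pd
    linarith
  intro p
  -- second-order facts at p
  have key : ∀ (e e' : ℝ × ℝ) (v : ℝ × ℝ → Fin (n+2) → ℝ) (v' : (ℝ × ℝ) →L[ℝ] (Fin (n+2) → ℝ)),
      HasFDerivAt v v' p → ∀ c : ℝ, (∀ q, B n (pd n σ e q) (v q) = c) →
      B n (pd n (pd n σ e) e' p) (v p) + B n (pd n σ e p) (v' e') = 0 := by
    intro e e' v v' hv c hc
    have h := B_deriv_zero n (hasFDerivAt_pd n hσ e p) hv hc e'
    rw [show ((ContinuousLinearMap.apply ℝ (Fin (n+2) → ℝ) e).comp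
        (fderiv ℝ (fderiv ℝ σ) p)) e' = pd n (pd n σ e) e' p from (pd_pd_eq n hσ e e' p).symm] at h
    exact h
  -- B(σ_xx, σ) = -1
  have f3 : B n (pd n (pd n σ (1,0)) (1,0) p) (σ p) = -1 := by
    have h := key (1,0) (1,0) σ (fderiv ℝ σ p) (hσd p) 0 f1
    have hx' := hx p
    unfold pd at h hx' ⊢
    linarith
  have f4 : B n (pd n (pd n σ (0,1)) (0,1) p) (σ p) = -1 := by
    have h := key (0,1) (0,1) σ (fderiv ℝ σ p) (hσd p) 0 f2
    have hy' := hy p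
    unfold pd at h hy' ⊢
    linarith
  -- B(σ_xx, σ_x) = 0
  have f5 : B n (pd n (pd n σ (1,0)) (1,0) p) (pd n σ (1,0) p) = 0 := by
    have h := key (1,0) (1,0) (pd n σ (1,0))
      ((ContinuousLinearMap.apply ℝ (Fin (n+2) → ℝ) (1,0)).comp (fderiv ℝ (fderiv ℝ σ) p))
      (hasFDerivAt_pd n hσ (1,0) p) 1 hx
    rw [pd_pd_eq n hσ (1,0) (1,0) p] at h
    rw [B_symm n (pd n σ (1,0) p)] at h
    rw [pd_pd_eq n hσ (1,0) (1,0) p]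
    simp only [ContinuousLinearMap.comp_apply, ContinuousLinearMap.apply_apply] at h
    linarith
  have f6 : B n (pd n (pd n σ (0,1)) (0,1) p) (pd n σ (0,1) p) = 0 := by
    have h := key (0,1) (0,1) (pd n σ (0,1))
      ((ContinuousLinearMap.apply ℝ (Fin (n+2) → ℝ) (0,1)).comp (fderiv ℝ (fderiv ℝ σ) p))
      (hasFDerivAt_pd n hσ (0,1) p) 1 hy
    rw [pd_pd_eq n hσ (0,1) (0,1) p] at h
    rw [B_symm n (pd n σ (0,1) p)] at h
    rw [pd_pd_eq n hσ (0,1) (0,1) p]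
    simp only [ContinuousLinearMap.comp_apply, ContinuousLinearMap.apply_apply] at h
    linarith
  -- B(σ_yx, σ_y) = 0
  have f7 : B n (pd n (pd n σ (0,1)) (1,0) p) (pd n σ (0,1) p) = 0 := by
    have h := key (0,1) (1,0) (pd n σ (0,1))
      ((ContinuousLinearMap.apply ℝ (Fin (n+2) → ℝ) (0,1)).comp (fderiv ℝ (fderiv ℝ σ) p))
      (hasFDerivAt_pd n hσ (0,1) p) 1 hy
    rw [pd_pd_eq n hσ (0,1) (1,0) p] at h ⊢
    rw [B_symm n (pd n σ (0,1) p)] at h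
    simp only [ContinuousLinearMap.comp_apply, ContinuousLinearMap.apply_apply] at h
    linarith
  -- B(σ_xy, σ_x) = 0
  have f8 : B n (pd n (pd n σ (1,0)) (0,1) p) (pd n σ (1,0) p) = 0 := by
    have h := key (1,0) (0,1) (pd n σ (1,0))
      ((ContinuousLinearMap.apply ℝ (Fin (n+2) → ℝ) (1,0)).comp (fderiv ℝ (fderiv ℝ σ) p))
      (hasFDerivAt_pd n hσ (1,0) p) 1 hx
    rw [pd_pd_eq n hσ (1,0) (0,1) p] at h ⊢
    rw [B_symm n (pd n σ (1,0) p)] at h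
    simp only [ContinuousLinearMap.comp_apply, ContinuousLinearMap.apply_apply] at h
    linarith
  -- from orthogonality: B(σ_xx, σ_y) = 0 and B(σ_x, σ_yy) = 0
  have f9 : B n (pd n (pd n σ (1,0)) (1,0) p) (pd n σ (0,1) p) = 0 := by
    have h := key (1,0) (1,0) (pd n σ (0,1))
      ((ContinuousLinearMap.apply ℝ (Fin (n+2) → ℝ) (0,1)).comp (fderiv ℝ (fderiv ℝ σ) p))
      (hasFDerivAt_pd n hσ (0,1) p) 0 horth
    rw [show ((ContinuousLinearMap.apply ℝ (Fin (n+2) → ℝ) (0,1)).comp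
        (fderiv ℝ (fderiv ℝ σ) p)) (1,0) = pd n (pd n σ (0,1)) (1,0) p
        from (pd_pd_eq n hσ (0,1) (1,0) p).symm] at h
    rw [pd_symm n hσ (0,1) (1,0) p] at h
    rw [B_symm n (pd n σ (1,0) p)] at h
    have := f8
    linarith
  have f10 : B n (pd n σ (1,0) p) (pd n (pd n σ (0,1)) (0,1) p) = 0 := by
    have h := key (1,0) (0,1) (pd n σ (0,1))
      ((ContinuousLinearMap.apply ℝ (Fin (n+2) → ℝ) (0,1)).comp (fderiv ℝ (fderiv ℝ σ) p))
      (hasFDerivAt_pd n hσ (0,1) p) 0 horth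
    rw [show ((ContinuousLinearMap.apply ℝ (Fin (n+2) → ℝ) (0,1)).comp
        (fderiv ℝ (fderiv ℝ σ) p)) (0,1) = pd n (pd n σ (0,1)) (0,1) p
        from (pd_pd_eq n hσ (0,1) (0,1) p).symm] at h
    rw [pd_symm n hσ (1,0) (0,1) p] at h
    have := f7
    linarith
  -- abbreviations
  set S := σ p with hS
  set X := pd n σ (1,0) p with hX
  set Y := pd n σ (0,1) p with hY
  set XX := pd n (pd n σ (1,0)) (1,0) p with hXX
  set YY := pd n (pd n σ (0,1)) (0,1) p with hYY
  -- Gram entries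
  have e00 : B n S S = 0 := h0 p
  have e10 : B n X S = 0 := f1 p
  have e20 : B n Y S = 0 := f2 p
  have e01 : B n S X = 0 := by rw [B_symm]; exact e10
  have e02 : B n S Y = 0 := by rw [B_symm]; exact e20
  have e11 : B n X X = 1 := hx p
  have e22 : B n Y Y = 1 := hy p
  have e12 : B n X Y = 0 := horth p
  have e21 : B n Y X = 0 := by rw [B_symm]; exact e12
  have e03 : B n S (XX + YY) = -2 := by
    rw [B_add_right, B_symm n S XX, B_symm n S YY, f3, f4]; norm_num
  have e30 : B n (XX + YY) S = -2 := by rw [B_symm]; exact e03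
  have e13 : B n X (XX + YY) = 0 := by
    rw [B_add_right, B_symm n X XX, f5, f10]; norm_num
  have e31 : B n (XX + YY) X = 0 := by rw [B_symm]; exact e13
  have e23 : B n Y (XX + YY) = 0 := by
    rw [B_add_right, B_symm n Y XX, B_symm n Y YY, f9, f6]; norm_num
  have e32 : B n (XX + YY) Y = 0 := by rw [B_symm]; exact e23
  constructor
  · simp [Matrix.det_succ_row_zero, Fin.sum_univ_succ, e00, e01, e02, e03, e10, e11, e12, e13,
      e20, e21, e22, e23, e30, e31, e32]
    norm_num [show (Fin.castSucc 2 : Fin 4) = 2 from rfl, show (Fin.succAbove 3 2 : Fin 4) = 2 from rfl, show (![S, X, Y, XX + YY] 2) = Y from rfl, e22]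
  · rw [Fintype.linearIndependent_iff]
    intro g hg
    rw [Fin.sum_univ_four] at hg
    simp only [Matrix.cons_val_zero, Matrix.cons_val_one, Matrix.head_cons,
      Matrix.cons_val_two, Matrix.tail_cons, Matrix.cons_val_three] at hg
    have e31' : B n YY X = 0 := by rw [B_symm]; exact f10
    have hk : ∀ w, g 0 * B n S w + g 1 * B n X w + g 2 * B n Y w
        + (g 3 * B n XX w + g 3 * B n YY w) = 0 := by
      intro w
      have h := congrArg (fun u => B n u w) hg
      simpa [B_add_left, B_smul_left, B_zero_left] using h
    have h1 := hk S; rw [e00, e10, e20, f3, f4] at h1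
    have h2 := hk X; rw [e01, e11, e21, f5, e31'] at h2
    have h3 := hk Y; rw [e02, e12, e22, f9, f6] at h3
    have hg3 : g 3 = 0 := by linarith
    have h4 := hk (XX + YY); rw [e03, e13, e23, hg3] at h4
    have hg1 : g 1 = 0 := by linarith
    have hg2 : g 2 = 0 := by linarith
    have hg0 : g 0 = 0 := by linarith
    intro i
    fin_cases i <;> simp [hg0, hg1, hg2, hg3]
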